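/- Let B be a two-sided Brownian motion on ℝ with diffusion coefficient 2. There exists C > 0 such that for all r > 0, P( there exists z ∈ ℝ with B(z) ≥ r²/8 + z²/8 ) ≤ C·exp(−r³/C). -/

import Mathlib

open MeasureTheory ProbabilityTheory

/-- A two-sided Brownian motion with diffusion coefficient 2: continuous paths,
starts at 0, Gaussian increments with variance `2|t-s|`, and independent increments. -/
structure IsTwoSidedBM {Ω : Type*} [MeasureSpace Ω] (B : ℝ → Ω → ℝ) : Prop where
  meas : ∀ t : ℝ, Measurable (B t)
  init : ∀ᵐ ω : Ω, B 0 ω = 0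
  cont : ∀ᵐ ω : Ω, Continuous fun t => B t ω
  gauss : ∀ s t : ℝ, s ≤ t →
    Measure.map (fun ω => B t ω - B s ω) ℙ = gaussianReal 0 (Real.toNNReal (2*(t-s)))
  indep : ∀ (n : ℕ) (t : Fin (n+1) → ℝ), Monotone t →
    iIndepFun
      (fun i : Fin n => fun ω => B (t i.succ) ω - B (t i.castSucc) ω) ℙ



section AuxLemmas

open Real

-- symmetry
lemma gauss_neg (v : NNReal) : Measure.map (fun x : ℝ => -x) (gaussianReal 0 v) = gaussianReal 0 v := by
  have := gaussianReal_map_const_mul (μ := 0) (v := v) (-1)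
  simp only [neg_one_mul, mul_zero] at this
  rw [this]
  congr 1
  ext
  simp

lemma gauss_half (v : NNReal) : (1:ENNReal)/2 ≤ gaussianReal 0 v {x | 0 ≤ x} := by
  have hsym : gaussianReal 0 v {x | 0 ≤ x} = gaussianReal 0 v {x | x ≤ 0} := by
    conv_lhs => rw [← gauss_neg v]
    rw [Measure.map_apply measurable_neg (by exact measurableSet_Ici)]
    congr 1
    ext x; simp
  have hu : (1:ENNReal) = gaussianReal 0 v ({x | 0 ≤ x} ∪ {x | x ≤ 0}) := by
    have : ({x : ℝ | 0 ≤ x} ∪ {x | x ≤ 0}) = Set.univ := by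
      ext x; simp [le_total 0 x]
    rw [this]; simp
  have := measure_union_le (μ := gaussianReal 0 v) {x : ℝ | 0 ≤ x} {x | x ≤ 0}
  rw [← hu, ← hsym] at this
  rw [ENNReal.div_le_iff (by norm_num) (by norm_num)]
  calc (1:ENNReal) ≤ gaussianReal 0 v {x | 0 ≤ x} + gaussianReal 0 v {x | 0 ≤ x} := this
  _ = gaussianReal 0 v {x | 0 ≤ x} * 2 := by ring

lemma pdf_bound (v : NNReal) (b w x : ℝ) (hb : 0 ≤ b) (hvw : (v:ℝ) ≤ w) (hw : 0 < w)
    (hv : 0 < (v:ℝ)) (hx : b < x) :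
    gaussianPDFReal 0 v x ≤ Real.exp (-(b^2)/(4*w)) * (Real.sqrt 2 * gaussianPDFReal 0 (2*v) x) := by
  have hs2 : Real.sqrt 2 ≠ 0 := by positivity
  have hπ : (0:ℝ) < 2 * π * v := by positivity
  have e1 : gaussianPDFReal 0 v x = (Real.sqrt (2*π*v))⁻¹ * rexp (-x^2/(2*(v:ℝ))) := by
    unfold gaussianPDFReal; rw [sub_zero]
  have e2 : Real.sqrt 2 * gaussianPDFReal 0 (2*v) x
      = (Real.sqrt (2*π*v))⁻¹ * rexp (-x^2/(4*(v:ℝ))) := by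
    unfold gaussianPDFReal
    rw [sub_zero]
    have h1 : Real.sqrt (2 * π * ((2*v : NNReal) : ℝ)) = Real.sqrt 2 * Real.sqrt (2 * π * v) := by
      push_cast
      rw [← Real.sqrt_mul (by norm_num)]
      ring_nf
    rw [h1]
    have h3 : (2 * ((2*v : NNReal):ℝ)) = 4 * (v:ℝ) := by push_cast; ring
    rw [h3, mul_inv, ← mul_assoc, mul_inv_cancel_left₀ hs2]
  calc gaussianPDFReal 0 v x = (Real.sqrt (2*π*v))⁻¹ * rexp (-x^2/(2*(v:ℝ))) := e1
    _ ≤ (Real.sqrt (2*π*v))⁻¹ * (rexp (-(b^2)/(4*w)) * rexp (-x^2/(4*(v:ℝ)))) := by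
        refine mul_le_mul_of_nonneg_left ?_ (by positivity)
        rw [← Real.exp_add, Real.exp_le_exp]
        rw [div_add_div _ _ (by positivity) (by positivity),
          div_le_div_iff₀ (by positivity) (by positivity)]
        have hbx : b^2 ≤ x^2 := by nlinarith
        have h4 : b^2 * (v:ℝ) ≤ x^2 * w := by
          calc b^2 * (v:ℝ) ≤ x^2 * (v:ℝ) := by gcongr
          _ ≤ x^2 * w := by gcongr
        nlinarith [sq_nonneg x, hv, hw]
    _ = rexp (-(b^2)/(4*w)) * ((Real.sqrt (2*π*v))⁻¹ * rexp (-x^2/(4*(v:ℝ)))) := by ring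
    _ = rexp (-(b^2)/(4*w)) * (Real.sqrt 2 * gaussianPDFReal 0 (2*v) x) := by rw [e2]

lemma gauss_tail (v : NNReal) (b w : ℝ) (hb : 0 ≤ b) (hvw : (v:ℝ) ≤ w) (hw : 0 < w) :
    gaussianReal 0 v {x | b < x} ≤ ENNReal.ofReal (Real.sqrt 2 * Real.exp (-(b^2)/(4*w))) := by
  by_cases hv : v = 0
  · subst hv
    rw [gaussianReal_zero_var]
    have : {x : ℝ | b < x} = Set.Ioi b := rfl
    rw [this, Measure.dirac_apply' _ measurableSet_Ioi]
    simp only [Set.indicator_apply, Set.mem_Ioi]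
    rw [if_neg (by linarith)]
    positivity
  · have hvpos : 0 < (v:ℝ) := by positivity
    rw [gaussianReal_apply 0 hv]
    have hmeps : Measurable fun x => ENNReal.ofReal (Real.sqrt 2 * Real.exp (-(b^2)/(4*w))) * gaussianPDF 0 (2*v) x :=
      (measurable_gaussianPDF 0 (2*v)).const_mul _
    calc ∫⁻ x in {x | b < x}, gaussianPDF 0 v x
        ≤ ∫⁻ x in {x | b < x}, ENNReal.ofReal (Real.sqrt 2 * Real.exp (-(b^2)/(4*w))) * gaussianPDF 0 (2*v) x := by
          refine setLIntegral_mono hmeps fun x hx => ?_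
          rw [gaussianPDF_def, gaussianPDF_def, ← ENNReal.ofReal_mul (by positivity)]
          refine ENNReal.ofReal_le_ofReal ?_
          have := pdf_bound v b w x hb hvw hw hvpos hx
          calc gaussianPDFReal 0 v x ≤ _ := this
          _ = Real.sqrt 2 * Real.exp (-(b^2)/(4*w)) * gaussianPDFReal 0 (2*v) x := by ring
      _ = ENNReal.ofReal (Real.sqrt 2 * Real.exp (-(b^2)/(4*w))) * ∫⁻ x in {x | b < x}, gaussianPDF 0 (2*v) x := by
          rw [lintegral_const_mul _ (measurable_gaussianPDF 0 (2*v))]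
      _ ≤ ENNReal.ofReal (Real.sqrt 2 * Real.exp (-(b^2)/(4*w))) * ∫⁻ x, gaussianPDF 0 (2*v) x := by
          gcongr
          exact Measure.restrict_le_self
      _ = ENNReal.ofReal (Real.sqrt 2 * Real.exp (-(b^2)/(4*w))) := by
          rw [lintegral_gaussianPDF_eq_one 0 (by simp [hv]), mul_one]

lemma myReindex {Ω : Type} [MeasureSpace Ω] {n : ℕ} (f : Fin n → Ω → ℝ) (ρ : Fin n ≃ Fin n)
    (h : iIndepFun f ℙ) :
    iIndepFun (fun i => f (ρ i)) ℙ := by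
  rw [iIndepFun_iff_measure_inter_preimage_eq_mul] at h ⊢
  intro S sets hsets
  classical
  have key := h (S.image ρ) (sets := fun j => sets (ρ.symm j))
    (fun j hj => by
      obtain ⟨i, hi, rfl⟩ := Finset.mem_image.mp hj
      simpa using hsets i hi)
  have hset : (⋂ j ∈ S.image ρ, f j ⁻¹' sets (ρ.symm j)) = ⋂ i ∈ S, f (ρ i) ⁻¹' sets i := by
    ext ω
    simp only [Set.mem_iInter, Finset.mem_image]
    constructor
    · intro hωj i hi
      have := hωj (ρ i) ⟨i, hi, rfl⟩
      rwa [Equiv.symm_apply_apply] at this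
    · rintro hωi j ⟨i, hi, rfl⟩
      rw [Equiv.symm_apply_apply]
      exact hωi i hi
  have hprod : ∏ j ∈ S.image ρ, ℙ (f j ⁻¹' sets (ρ.symm j)) = ∏ i ∈ S, ℙ (f (ρ i) ⁻¹' sets i) := by
    rw [Finset.prod_image (fun i _ j _ hij => ρ.injective hij)]
    refine Finset.prod_congr rfl (fun i _ => by rw [Equiv.symm_apply_apply])
  rw [← hset, ← hprod]
  exact key

lemma myReflection {Ω : Type} [MeasureSpace Ω] [IsProbabilityMeasure (ℙ : Measure Ω)]
    (N : ℕ) (X : ℕ → Ω → ℝ) (hmeas : ∀ i, Measurable (X i))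
    (hindep : iIndepFun
      (fun i : Fin N => X i.val) ℙ)
    (hmed : ∀ k, k ≤ N → (1:ENNReal)/2 ≤ ℙ {ω | 0 ≤ ∑ i ∈ Finset.Ico k N, X i ω})
    (b : ℝ) :
    ℙ {ω | ∃ k ≤ N, b < ∑ i ∈ Finset.range k, X i ω}
      ≤ 2 * ℙ {ω | b < ∑ i ∈ Finset.range N, X i ω} := by
  classical
  set S : ℕ → Ω → ℝ := fun k ω => ∑ i ∈ Finset.range k, X i ω with hS
  have hSmeas : ∀ k, Measurable (S k) := fun k => Finset.measurable_sum _ (fun i _ => hmeas i)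
  set T : ℕ → Ω → ℝ := fun k ω => ∑ i ∈ Finset.Ico k N, X i ω with hT
  have hTmeas : ∀ k, Measurable (T k) := fun k => Finset.measurable_sum _ (fun i _ => hmeas i)
  set A : ℕ → Set Ω := fun k => {ω | b < S k ω ∧ ∀ j < k, S j ω ≤ b} with hA
  set C : ℕ → Set Ω := fun k => {ω | 0 ≤ T k ω} with hC
  have hCmeas : ∀ k, MeasurableSet (C k) :=
    fun k => measurableSet_le measurable_const (hTmeas k)
  have hAmeas : ∀ k, MeasurableSet (A k) := by
    intro k
    have h2 : MeasurableSet {ω | ∀ j < k, S j ω ≤ b} := by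
      have : {ω | ∀ j < k, S j ω ≤ b} = ⋂ j ∈ Finset.range k, {ω | S j ω ≤ b} := by
        ext ω; simp [Finset.mem_range]
      rw [this]
      exact (Finset.range k).measurableSet_biInter
        (fun j _ => measurableSet_le (hSmeas j) measurable_const)
    exact (measurableSet_lt measurable_const (hSmeas k)).inter h2
  have hdisj : ∀ k k', k < k' → Disjoint (A k) (A k') := by
    intro k k' hkk'
    rw [Set.disjoint_left]
    rintro ω ⟨h1, _⟩ ⟨_, h2⟩
    exact absurd (h2 k hkk') (not_le.mpr h1)
  -- key independence bound
  have key : ∀ k, k ≤ N → ℙ (A k) ≤ 2 * ℙ (A k ∩ C k) := by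
    intro k hk
    set s : Finset (Fin N) := Finset.univ.filter (fun i : Fin N => (i:ℕ) < k) with hs
    set t : Finset (Fin N) := Finset.univ.filter (fun i : Fin N => k ≤ (i:ℕ)) with ht
    have hst : Disjoint s t := by
      rw [Finset.disjoint_left]
      intro i hi hi'
      simp only [hs, ht, Finset.mem_filter] at hi hi'
      omega
    have h1 := hindep.indepFun_finset s t hst (fun i => hmeas i.val)
    set φ : (∀ _ : ↥s, ℝ) → (ℕ → ℝ) :=
      fun x j => ∑ i ∈ Finset.univ.filter (fun i : ↥s => ((i : Fin N) : ℕ) < j), x i with hφ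
    set ψ : (∀ _ : ↥t, ℝ) → ℝ := fun x => ∑ i, x i with hψ
    have hφm : Measurable φ :=
      measurable_pi_lambda _ (fun j => Finset.measurable_sum _ fun i _ => measurable_pi_apply i)
    have hψm : Measurable ψ := Finset.measurable_sum _ fun i _ => measurable_pi_apply i
    have h2 := h1.comp hφm hψm
    -- identify ψ ∘ g₂ with T k
    have hTk : (ψ ∘ fun a (i : ↥t) => X (i:Fin N).val a) = T k := by
      funext ω
      simp only [Function.comp_apply, hψ, hT]
      rw [Finset.sum_coe_sort t (fun i => X i.val ω)]
      have himg : t.image (fun i : Fin N => i.val) = Finset.Ico k N := by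
        ext j
        simp only [Finset.mem_image, Finset.mem_Ico, ht, Finset.mem_filter, Finset.mem_univ,
          true_and]
        constructor
        · rintro ⟨i, hi, rfl⟩; exact ⟨hi, i.isLt⟩
        · rintro ⟨h1', h2'⟩; exact ⟨⟨j, h2'⟩, h1', rfl⟩
      rw [← himg, Finset.sum_image (fun i _ j _ h => Fin.val_injective h)]
    -- identify partial sums
    have hSj : ∀ j, j ≤ k → ∀ ω, (φ ((fun a (i : ↥s) => X (i:Fin N).val a) ω)) j = S j ω := by
      intro j hj ω
      simp only [hφ, hS]
      rw [Finset.sum_filter, Finset.sum_coe_sort s (fun i => if (i:ℕ) < j then X i.val ω else 0),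
        ← Finset.sum_filter]
      have hss : s.filter (fun i : Fin N => (i:ℕ) < j) = Finset.univ.filter (fun i : Fin N => (i:ℕ) < j) := by
        rw [hs, Finset.filter_filter]
        apply Finset.filter_congr
        intro i _
        constructor
        · rintro ⟨_, h⟩; exact h
        · intro h; exact ⟨lt_of_lt_of_le h hj, h⟩
      rw [hss]
      have himg : (Finset.univ.filter (fun i : Fin N => (i:ℕ) < j)).image (fun i : Fin N => i.val)
          = Finset.range j := by
        ext m
        simp only [Finset.mem_image, Finset.mem_range, Finset.mem_filter, Finset.mem_univ, true_and]
        constructor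
        · rintro ⟨i, hi, rfl⟩; exact hi
        · intro hm; exact ⟨⟨m, lt_of_lt_of_le hm (le_trans hj hk)⟩, hm, rfl⟩
      rw [← himg, Finset.sum_image (fun i _ j' _ h => Fin.val_injective h)]
    -- A k as preimage
    set M : Set (ℕ → ℝ) := {y | b < y k ∧ ∀ j < k, y j ≤ b} with hM
    have hMmeas : MeasurableSet M := by
      have hm1 : MeasurableSet {y : ℕ → ℝ | b < y k} :=
        measurableSet_lt measurable_const (measurable_pi_apply k)
      have hm2 : MeasurableSet {y : ℕ → ℝ | ∀ j < k, y j ≤ b} := by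
        have : {y : ℕ → ℝ | ∀ j < k, y j ≤ b} = ⋂ j ∈ Finset.range k, {y : ℕ → ℝ | y j ≤ b} := by
          ext y; simp [Finset.mem_range]
        rw [this]
        exact (Finset.range k).measurableSet_biInter
          (fun j _ => measurableSet_le (measurable_pi_apply j) measurable_const)
      exact hm1.inter hm2
    have hAeq : A k = (φ ∘ fun a (i : ↥s) => X (i:Fin N).val a) ⁻¹' M := by
      ext ω
      simp only [hA, Set.mem_setOf_eq, Set.mem_preimage, hM, Function.comp_apply]
      rw [hSj k le_rfl ω]
      constructor
      · rintro ⟨h1', h2'⟩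
        exact ⟨h1', fun j hj => by rw [hSj j (le_of_lt hj) ω]; exact h2' j hj⟩
      · rintro ⟨h1', h2'⟩
        exact ⟨h1', fun j hj => by rw [← hSj j (le_of_lt hj) ω]; exact h2' j hj⟩
    have hCeq : C k = (ψ ∘ fun a (i : ↥t) => X (i:Fin N).val a) ⁻¹' {x | 0 ≤ x} := by
      rw [hTk]; rfl
    have hprod : ℙ (A k ∩ C k) = ℙ (A k) * ℙ (C k) := by
      rw [hAeq, hCeq]
      exact h2.measure_inter_preimage_eq_mul M {x | 0 ≤ x} hMmeas
        (measurableSet_le measurable_const measurable_id)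
    have hhalf : (1:ENNReal)/2 ≤ ℙ (C k) := hmed k hk
    calc ℙ (A k) = 2 * (ℙ (A k) * (1/2)) := by
          rw [← mul_assoc, mul_comm (2:ENNReal), mul_assoc, one_div,
            ENNReal.mul_inv_cancel (by norm_num) (by norm_num), mul_one]
      _ ≤ 2 * (ℙ (A k) * ℙ (C k)) := by gcongr
      _ = 2 * ℙ (A k ∩ C k) := by rw [hprod]
  -- cover
  have hcover : {ω | ∃ k ≤ N, b < S k ω} = ⋃ k ∈ Finset.range (N+1), A k := by
    ext ω
    simp only [Set.mem_setOf_eq, Set.mem_iUnion, Finset.mem_range]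
    constructor
    · rintro ⟨k, hk, hbk⟩
      have hex : ∃ m, b < S m ω := ⟨k, hbk⟩
      refine ⟨Nat.find hex, ⟨?_, Nat.find_spec hex, fun j hj => le_of_not_gt (Nat.find_min hex hj)⟩⟩
      have := Nat.find_min' hex hbk
      omega
    · rintro ⟨k, hk, h1, _⟩
      exact ⟨k, by omega, h1⟩
  have hpd : (↑(Finset.range (N+1)) : Set ℕ).PairwiseDisjoint A := by
    intro i _ j _ hij
    rcases lt_or_gt_of_ne hij with h | h
    · exact hdisj i j h
    · exact (hdisj j i h).symm
  have hpd2 : (↑(Finset.range (N+1)) : Set ℕ).PairwiseDisjoint (fun k => A k ∩ C k) := by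
    intro i hi j hj hij
    exact Set.disjoint_of_subset Set.inter_subset_left Set.inter_subset_left (hpd hi hj hij)
  calc ℙ {ω | ∃ k ≤ N, b < S k ω} = ∑ k ∈ Finset.range (N+1), ℙ (A k) := by
        rw [hcover, measure_biUnion_finset hpd (fun k _ => hAmeas k)]
    _ ≤ ∑ k ∈ Finset.range (N+1), 2 * ℙ (A k ∩ C k) := by
        refine Finset.sum_le_sum (fun k hk => key k ?_)
        simp only [Finset.mem_range] at hk; omega
    _ = 2 * ∑ k ∈ Finset.range (N+1), ℙ (A k ∩ C k) := by rw [Finset.mul_sum]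
    _ = 2 * ℙ (⋃ k ∈ Finset.range (N+1), (A k ∩ C k)) := by
        rw [measure_biUnion_finset hpd2 (fun k _ => (hAmeas k).inter (hCmeas k))]
    _ ≤ 2 * ℙ {ω | b < S N ω} := by
        gcongr
        refine Set.iUnion₂_subset (fun k hk => ?_)
        simp only [Finset.mem_range] at hk
        rintro ω ⟨⟨h1, _⟩, h2⟩
        have : S k ω + T k ω = S N ω := Finset.sum_range_add_sum_Ico _ (by omega)
        simp only [Set.mem_setOf_eq]
        have h2' : (0:ℝ) ≤ T k ω := h2
        linarith

lemma oneSided {Ω : Type} [MeasureSpace Ω] [IsProbabilityMeasure (ℙ : Measure Ω)]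
    (B : ℝ → Ω → ℝ) (hmeas : ∀ t, Measurable (B t))
    (hgauss : ∀ s t : ℝ, 0 ≤ s → s ≤ t →
      Measure.map (fun ω => B t ω - B s ω) ℙ = gaussianReal 0 (Real.toNNReal (2*(t-s))))
    (hindep : ∀ (n : ℕ) (t : Fin (n+1) → ℝ), Monotone t → 0 ≤ t 0 →
      iIndepFun
        (fun i : Fin n => fun ω => B (t i.succ) ω - B (t i.castSucc) ω) ℙ)
    (T b : ℝ) (hT : 0 < T) (hb : 0 ≤ b) :
    ℙ (⋃ q : ℚ, {ω | (q:ℝ) ∈ Set.Icc (0:ℝ) T ∧ b < B q ω - B 0 ω})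
      ≤ ENNReal.ofReal (4 * Real.exp (-(b^2)/(8*T))) := by
  classical
  set D : ℚ → Set Ω := fun q => {ω | (q:ℝ) ∈ Set.Icc (0:ℝ) T ∧ b < B q ω - B 0 ω} with hD
  obtain ⟨e, he⟩ := exists_surjective_nat ℚ
  set V : ℕ → Set Ω := fun m => ⋃ i ∈ Finset.range m, D (e i) with hV
  have hVmono : Monotone V := by
    intro m m' hm
    exact Set.biUnion_subset_biUnion_left (Finset.coe_subset.mpr (Finset.range_subset_range.mpr hm))
  have hunion : (⋃ q : ℚ, D q) = ⋃ m, V m := by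
    apply Set.Subset.antisymm
    · refine Set.iUnion_subset fun q => ?_
      obtain ⟨i, rfl⟩ := he q
      exact fun ω hω => Set.mem_iUnion.mpr ⟨i+1, Set.mem_biUnion (Finset.mem_range.mpr (by omega)) hω⟩
    · exact Set.iUnion_subset fun m => Set.iUnion₂_subset fun i _ => Set.subset_iUnion D (e i)
  rw [hunion, (hVmono.directed_le).measure_iUnion]
  refine iSup_le fun m => ?_
  -- finite set of times
  set F : Finset ℝ := ((Finset.range m).filter (fun i => (e i : ℝ) ∈ Set.Icc (0:ℝ) T)).image
    (fun i => ((e i : ℝ))) with hF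
  have hFmem : ∀ x ∈ F, x ∈ Set.Icc (0:ℝ) T := by
    intro x hx
    simp only [hF, Finset.mem_image, Finset.mem_filter] at hx
    obtain ⟨i, ⟨_, hi⟩, rfl⟩ := hx
    exact hi
  set N := F.card with hN
  set σ := F.orderIsoOfFin rfl with hσ
  set u : ℕ → ℝ := fun j => if j = 0 then 0 else if h : j - 1 < N then (σ ⟨j-1, h⟩ : ℝ) else T
    with hu
  have hu0 : u 0 = 0 := by simp [hu]
  have humem : ∀ j, 0 ≤ u j ∧ u j ≤ T := by
    intro j
    rcases Nat.eq_zero_or_pos j with rfl | hj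
    · rw [hu0]; exact ⟨le_rfl, le_of_lt hT⟩
    · simp only [hu, if_neg (by omega : ¬ j = 0)]
      split_ifs with h
      · exact hFmem _ (σ ⟨j-1, h⟩).2
      · exact ⟨le_of_lt hT, le_rfl⟩
  have humono : Monotone u := by
    apply monotone_nat_of_le_succ
    intro j
    rcases Nat.eq_zero_or_pos j with rfl | hj
    · rw [hu0]; exact (humem 1).1
    · simp only [hu, if_neg (by omega : ¬ j = 0), if_neg (by omega : ¬ j + 1 = 0)]
      split_ifs with h1 h2 h2
      · have : (⟨j-1, h1⟩ : Fin N) ≤ ⟨j+1-1, h2⟩ := by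
          simp only [Fin.mk_le_mk]; omega
        exact_mod_cast (σ.le_iff_le.mpr this)
      · exact (hFmem _ (σ ⟨j-1, h1⟩).2).2
      · omega
      · exact le_rfl
  set X : ℕ → Ω → ℝ := fun i ω => B (u (i+1)) ω - B (u i) ω with hX
  have hXmeas : ∀ i, Measurable (X i) := fun i => (hmeas _).sub (hmeas _)
  have hindepX : iIndepFun
      (fun i : Fin N => X i.val) ℙ := by
    have := hindep N (fun i : Fin (N+1) => u i.val) (fun i j hij => humono hij)
      (by show (0:ℝ) ≤ u 0; rw [hu0])
    exact this
  have hSsum : ∀ k (ω : Ω), ∑ i ∈ Finset.range k, X i ω = B (u k) ω - B 0 ω := by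
    intro k ω
    rw [show (0:ℝ) = u 0 from hu0.symm]
    exact Finset.sum_range_sub (fun j => B (u j) ω) k
  have hTsum : ∀ k, k ≤ N → ∀ (ω : Ω), ∑ i ∈ Finset.Ico k N, X i ω = B (u N) ω - B (u k) ω := by
    intro k hk ω
    have h1 := Finset.sum_range_add_sum_Ico (fun i => X i ω) hk
    have h2 := hSsum k ω
    have h3 := hSsum N ω
    linarith
  have hmed : ∀ k, k ≤ N → (1:ENNReal)/2 ≤ ℙ {ω | 0 ≤ ∑ i ∈ Finset.Ico k N, X i ω} := by
    intro k hk
    have hset : {ω | 0 ≤ ∑ i ∈ Finset.Ico k N, X i ω} = {ω | 0 ≤ B (u N) ω - B (u k) ω} := by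
      ext ω; rw [Set.mem_setOf_eq, hTsum k hk ω]; rfl
    rw [hset]
    have hZ : Measurable (fun ω => B (u N) ω - B (u k) ω) := (hmeas _).sub (hmeas _)
    have : ℙ {ω | 0 ≤ B (u N) ω - B (u k) ω}
        = (Measure.map (fun ω => B (u N) ω - B (u k) ω) ℙ) {x | 0 ≤ x} := by
      have hs : MeasurableSet {x : ℝ | 0 ≤ x} := measurableSet_le measurable_const measurable_id
      rw [Measure.map_apply hZ hs]
      rfl
    rw [this, hgauss (u k) (u N) (humem k).1 (humono hk)]
    exact gauss_half _
  have hrefl := myReflection N X hXmeas hindepX hmed b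
  have hVsub : V m ⊆ {ω | ∃ k ≤ N, b < ∑ i ∈ Finset.range k, X i ω} := by
    intro ω hω
    simp only [hV, Set.mem_iUnion, Finset.mem_range] at hω
    obtain ⟨i, him, hmem, hbq⟩ := hω
    have hqF : ((e i : ℝ)) ∈ F := by
      simp only [hF, Finset.mem_image, Finset.mem_filter, Finset.mem_range]
      exact ⟨i, ⟨him, hmem⟩, rfl⟩
    obtain ⟨kk, hkk⟩ := σ.surjective ⟨_, hqF⟩
    refine ⟨kk.val + 1, by omega, ?_⟩
    rw [hSsum]
    have huk : u (kk.val + 1) = ((e i : ℝ)) := by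
      simp only [hu, if_neg (by omega : ¬ kk.val + 1 = 0)]
      rw [dif_pos (by simpa only [Nat.add_sub_cancel] using kk.isLt)]
      simp only [Nat.add_sub_cancel]
      rw [show (⟨kk.val, kk.isLt⟩ : Fin N) = kk from rfl, hkk]
    rw [huk]
    exact hbq
  calc ℙ (V m) ≤ ℙ {ω | ∃ k ≤ N, b < ∑ i ∈ Finset.range k, X i ω} := measure_mono hVsub
    _ ≤ 2 * ℙ {ω | b < ∑ i ∈ Finset.range N, X i ω} := hrefl
    _ ≤ ENNReal.ofReal (4 * Real.exp (-(b^2)/(8*T))) := by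
        have hset : {ω | b < ∑ i ∈ Finset.range N, X i ω} = {ω | b < B (u N) ω - B 0 ω} := by
          ext ω; rw [Set.mem_setOf_eq, hSsum N ω]; rfl
        rw [hset]
        have hZ : Measurable (fun ω => B (u N) ω - B 0 ω) := (hmeas _).sub (hmeas _)
        have hmap : ℙ {ω | b < B (u N) ω - B 0 ω}
            = (Measure.map (fun ω => B (u N) ω - B 0 ω) ℙ) {x | b < x} := by
          have hs : MeasurableSet {x : ℝ | b < x} := measurableSet_lt measurable_const measurable_id
          rw [Measure.map_apply hZ hs]
          rfl
        have hg := hgauss 0 (u N) le_rfl (humem N).1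
        rw [hmap, show (fun ω => B (u N) ω - B 0 ω) = (fun ω => B (u N) ω - B (0:ℝ) ω) from rfl, hg]
        have htail := gauss_tail (Real.toNNReal (2*(u N - 0))) b (2*T) hb ?_ (by linarith)
        · calc 2 * gaussianReal 0 (Real.toNNReal (2*(u N - 0))) {x | b < x}
              ≤ 2 * ENNReal.ofReal (Real.sqrt 2 * Real.exp (-(b^2)/(4*(2*T)))) := by gcongr
            _ ≤ ENNReal.ofReal (4 * Real.exp (-(b^2)/(8*T))) := by
                rw [show (2:ENNReal) = ENNReal.ofReal 2 by norm_num, ← ENNReal.ofReal_mul (by norm_num)]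
                apply ENNReal.ofReal_le_ofReal
                rw [show 4*(2*T) = 8*T by ring, ← mul_assoc]
                have : Real.sqrt 2 ≤ 2 := by
                  nlinarith [Real.sq_sqrt (show (0:ℝ) ≤ 2 by norm_num), Real.sqrt_nonneg 2]
                have hexp : (0:ℝ) ≤ Real.exp (-(b^2)/(8*T)) := le_of_lt (Real.exp_pos _)
                nlinarith
        · rw [Real.coe_toNNReal']
          have := (humem N).2
          have h2 : 2*(u N - 0) ≤ 2*T := by linarith
          exact max_le h2 (by linarith)

section
variable {Ω : Type} [MeasureSpace Ω] [IsProbabilityMeasure (ℙ : Measure Ω)] (B : ℝ → Ω → ℝ)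

lemma neg_gauss (hmeas : ∀ t : ℝ, Measurable (B t))
    (hgauss : ∀ s t : ℝ, s ≤ t →
      Measure.map (fun ω => B t ω - B s ω) ℙ = gaussianReal 0 (Real.toNNReal (2*(t-s))))
    (s t : ℝ) (hst : s ≤ t) :
    Measure.map (fun ω => B (-t) ω - B (-s) ω) ℙ = gaussianReal 0 (Real.toNNReal (2*(t-s))) := by
  have h := hgauss (-t) (-s) (by linarith)
  have hc : (fun ω => B (-t) ω - B (-s) ω) = (fun x : ℝ => -x) ∘ (fun ω => B (-s) ω - B (-t) ω) := by
    funext ω; simp only [Function.comp_apply]; ring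
  rw [hc, ← Measure.map_map (g := fun x : ℝ => -x) (f := fun ω => B (-s) ω - B (-t) ω) measurable_neg ((hmeas _).sub (hmeas _)), h,
    show (2*(-s - -t)) = 2*(t-s) by ring, gauss_neg]

lemma neg_indep
    (hindep : ∀ (n : ℕ) (t : Fin (n+1) → ℝ), Monotone t →
      iIndepFun
        (fun i : Fin n => fun ω => B (t i.succ) ω - B (t i.castSucc) ω) ℙ)
    (n : ℕ) (t : Fin (n+1) → ℝ) (ht : Monotone t) :
    iIndepFun
      (fun i : Fin n => fun ω => B (-(t i.succ)) ω - B (-(t i.castSucc)) ω) ℙ := by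
  set s : Fin (n+1) → ℝ := fun j => -(t j.rev) with hs
  have hsmono : Monotone s := by
    intro j j' hj
    simp only [hs, neg_le_neg_iff]
    exact ht (Fin.rev_le_rev.mpr hj)
  have hY := hindep n s hsmono
  have hYr := myReindex _ (Equiv.mk Fin.rev Fin.rev Fin.rev_rev Fin.rev_rev) hY
  have hcomp := hYr.comp (fun _ => fun x : ℝ => -x) (fun _ => measurable_neg)
  convert hcomp using 1
  funext i
  funext ω
  simp only [Function.comp_apply, Equiv.coe_fn_mk, hs]
  rw [show (i.rev.succ).rev = i.castSucc from by rw [Fin.rev_succ, Fin.rev_rev],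
    show (i.rev.castSucc).rev = i.succ from by rw [Fin.rev_castSucc, Fin.rev_rev]]
  ring

end

end AuxLemmas

theorem stmt_11 :
    ∃ C : ℝ, 0 < C ∧
      ∀ (Ω : Type) [MeasureSpace Ω] [IsProbabilityMeasure (ℙ : Measure Ω)]
        (B : ℝ → Ω → ℝ), IsTwoSidedBM B →
        ∀ r : ℝ, 0 < r →
          ℙ {ω | ∃ z : ℝ, r^2/8 + z^2/8 ≤ B z ω}
            ≤ ENNReal.ofReal (C * Real.exp (-(r^3)/C)) := by
  classical
  refine ⟨1048576, by norm_num, ?_⟩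
  intro Ω _ _ B hB r hr
  by_cases hr1 : r ≤ 1
  · refine le_trans prob_le_one ?_
    rw [show (1:ENNReal) = ENNReal.ofReal 1 by simp]
    apply ENNReal.ofReal_le_ofReal
    have h1 := Real.add_one_le_exp (-(r^3)/1048576)
    have hr3 : r^3 ≤ 1 := pow_le_one₀ hr.le hr1
    have hr3' : 0 < r^3 := by positivity
    nlinarith
  push_neg at hr1
  -- negative-time process
  set Bn : ℝ → Ω → ℝ := fun u ω => B (-u) ω with hBn
  have hmeasn : ∀ t : ℝ, Measurable (Bn t) := fun t => hB.meas (-t)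
  have hgaussn : ∀ s t : ℝ, 0 ≤ s → s ≤ t →
      Measure.map (fun ω => Bn t ω - Bn s ω) ℙ = gaussianReal 0 (Real.toNNReal (2*(t-s))) :=
    fun s t _ hst => neg_gauss B hB.meas hB.gauss s t hst
  have hindepn : ∀ (n : ℕ) (t : Fin (n+1) → ℝ), Monotone t → 0 ≤ t 0 →
      iIndepFun
        (fun i : Fin n => fun ω => Bn (t i.succ) ω - Bn (t i.castSucc) ω) ℙ :=
    fun n t ht _ => neg_indep B hB.indep n t ht
  -- union sets
  set b : ℕ → ℝ := fun n => (r^2+(n:ℝ)^2)/16 with hb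
  have hbpos : ∀ n : ℕ, 0 < b n := by
    intro n
    have : 0 < r^2 := by positivity
    have := sq_nonneg ((n:ℝ))
    simp only [hb]
    nlinarith
  set Up : ℕ → Set Ω := fun n =>
    ⋃ q : ℚ, {ω | (q:ℝ) ∈ Set.Icc (0:ℝ) ((n:ℝ)+1) ∧ b n < B q ω - B 0 ω} with hUp
  set Un : ℕ → Set Ω := fun n =>
    ⋃ q : ℚ, {ω | (q:ℝ) ∈ Set.Icc (0:ℝ) ((n:ℝ)+1) ∧ b n < Bn q ω - Bn 0 ω} with hUn
  set G : Set Ω := {ω | (Continuous fun t => B t ω) ∧ B 0 ω = 0} with hG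
  have hGc : ℙ Gᶜ = 0 := by
    have h := hB.cont.and hB.init
    rw [ae_iff] at h
    rw [hG, Set.compl_setOf]
    exact h
  have hsub : {ω | ∃ z : ℝ, r^2/8 + z^2/8 ≤ B z ω} ∩ G ⊆ (⋃ n : ℕ, Up n) ∪ ⋃ n : ℕ, Un n := by
    rintro ω ⟨⟨z, hz⟩, hcont, hB0⟩
    rcases le_or_gt 0 z with hz0 | hz0
    · -- positive side
      set n := Nat.floor z with hn
      have hn1 : (n:ℝ) ≤ z := Nat.floor_le hz0
      have hn2 : z < (n:ℝ)+1 := Nat.lt_floor_add_one z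
      have hath : 2 * b n ≤ B z ω := by
        refine le_trans ?_ hz
        simp only [hb]
        nlinarith
      have hzpos : 0 < z := by
        rcases eq_or_lt_of_le hz0 with h0 | h0
        · exfalso
          rw [← h0] at hz
          rw [hB0] at hz
          nlinarith
        · exact h0
      obtain ⟨δ, hδpos, hδ⟩ := Metric.continuous_iff.mp hcont z (b n) (hbpos n)
      obtain ⟨q, hq1, hq2⟩ := exists_rat_btwn (show max (z - δ) 0 < z from
        max_lt (by linarith) hzpos)
      have hqz : dist ((q:ℝ)) z < δ := by
        rw [Real.dist_eq, abs_lt]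
        constructor
        · have := le_max_left (z - δ) 0
          linarith [lt_of_le_of_lt this hq1]
        · linarith
      have hBq := hδ _ hqz
      rw [Real.dist_eq, abs_lt] at hBq
      left
      refine Set.mem_iUnion.mpr ⟨n, Set.mem_iUnion.mpr ⟨q, ⟨⟨?_, ?_⟩, ?_⟩⟩⟩
      · exact le_of_lt (lt_of_le_of_lt (le_max_right (z - δ) 0) hq1)
      · linarith
      · rw [hB0, sub_zero]
        have := hBq.2
        linarith
    · -- negative side
      set y := -z with hy
      have hy0 : 0 < y := by simp only [hy]; linarith
      set n := Nat.floor y with hn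
      have hn1 : (n:ℝ) ≤ y := Nat.floor_le (le_of_lt hy0)
      have hn2 : y < (n:ℝ)+1 := Nat.lt_floor_add_one y
      have hath : 2 * b n ≤ B z ω := by
        refine le_trans ?_ hz
        have hzz : z^2 = y^2 := by simp only [hy]; ring
        simp only [hb]
        nlinarith
      have hcont' : Continuous fun t : ℝ => B (-t) ω := hcont.comp continuous_neg
      obtain ⟨δ, hδpos, hδ⟩ := Metric.continuous_iff.mp hcont' y (b n) (hbpos n)
      obtain ⟨q, hq1, hq2⟩ := exists_rat_btwn (show max (y - δ) 0 < y from
        max_lt (by linarith) hy0)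
      have hqy : dist ((q:ℝ)) y < δ := by
        rw [Real.dist_eq, abs_lt]
        constructor
        · have := le_max_left (y - δ) 0
          linarith [lt_of_le_of_lt this hq1]
        · linarith
      have hBq := hδ _ hqy
      rw [Real.dist_eq, abs_lt] at hBq
      have hBy : B (-y) ω = B z ω := by simp only [hy, neg_neg]
      rw [hBy] at hBq
      right
      refine Set.mem_iUnion.mpr ⟨n, Set.mem_iUnion.mpr ⟨q, ⟨⟨?_, ?_⟩, ?_⟩⟩⟩
      · exact le_of_lt (lt_of_le_of_lt (le_max_right (y - δ) 0) hq1)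
      · linarith
      · show b n < Bn q ω - Bn 0 ω
        have h0 : Bn 0 ω = 0 := by
          simp only [hBn, neg_zero]
          exact hB0
        rw [h0, sub_zero]
        show b n < B (-(q:ℝ)) ω
        have := hBq.2
        linarith
  -- per-piece bounds
  set g : ℕ → ℝ := fun n => 4 * Real.exp (-(r^3)/8192) * (Real.exp (-(1:ℝ)/8192))^n with hg
  have hkey : ∀ n : ℕ, 4 * Real.exp (-((b n)^2)/(8*((n:ℝ)+1))) ≤ g n := by
    intro n
    have hx0 : (0:ℝ) ≤ (n:ℝ) := Nat.cast_nonneg n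
    have hineq : (r^3 + (n:ℝ))/8192 ≤ ((b n)^2)/(8*((n:ℝ)+1)) := by
      simp only [hb]
      rw [div_le_div_iff₀ (by norm_num) (by positivity)]
      have h1 : (0:ℝ) ≤ ((n:ℝ)*r - r^2)^2 := sq_nonneg _
      have h2 : (0:ℝ) ≤ ((n:ℝ) - 1)^2 := sq_nonneg _
      have h3 : (0:ℝ) ≤ (r^2 - 1) * (n:ℝ)^2 := mul_nonneg (by nlinarith) (sq_nonneg _)
      have h4 : (0:ℝ) ≤ r^3 * (r - 1) := mul_nonneg (by positivity) (by linarith)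
      nlinarith [h1, h2, h3, h4, sq_nonneg (n:ℝ), sq_nonneg r, sq_nonneg ((n:ℝ)^2 - r^2)]
    have hexp : -((b n)^2)/(8*((n:ℝ)+1)) ≤ -(r^3)/8192 + (n:ℝ) * (-(1:ℝ)/8192) := by
      rw [neg_div]
      have h2 := neg_le_neg hineq
      have h3 : -((r^3 + (n:ℝ))/8192) = -(r^3)/8192 + (n:ℝ) * (-(1:ℝ)/8192) := by ring
      linarith [h2, h3.le, h3.ge]
    simp only [hg]
    rw [mul_assoc, ← Real.exp_nat_mul, ← Real.exp_add]
    have h4 : (4:ℝ) * Real.exp (-(r^3)/8192) = 4 * Real.exp (-(r^3)/8192) := rfl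
    refine mul_le_mul_of_nonneg_left (Real.exp_le_exp.mpr ?_) (by norm_num)
    exact hexp
  have hUpB : ∀ n : ℕ, ℙ (Up n) ≤ ENNReal.ofReal (g n) := by
    intro n
    refine le_trans (oneSided B hB.meas (fun s t _ hst => hB.gauss s t hst)
      (fun m t ht _ => hB.indep m t ht) ((n:ℝ)+1) (b n) (by positivity) (le_of_lt (hbpos n))) ?_
    exact ENNReal.ofReal_le_ofReal (hkey n)
  have hUnB : ∀ n : ℕ, ℙ (Un n) ≤ ENNReal.ofReal (g n) := by
    intro n
    refine le_trans (oneSided Bn hmeasn hgaussn hindepn ((n:ℝ)+1) (b n)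
      (by positivity) (le_of_lt (hbpos n))) ?_
    exact ENNReal.ofReal_le_ofReal (hkey n)
  -- sum up
  set ρ : ℝ := Real.exp (-(1:ℝ)/8192) with hρ
  have hρ0 : 0 ≤ ρ := le_of_lt (Real.exp_pos _)
  have hρ1 : ρ < 1 := by
    rw [hρ, Real.exp_lt_one_iff]
    norm_num
  have hsummable : Summable g := by
    apply Summable.mul_left
    exact summable_geometric_of_lt_one hρ0 hρ1
  have htsum : ∑' n : ℕ, ENNReal.ofReal (g n) = ENNReal.ofReal (∑' n : ℕ, g n) := by
    rw [ENNReal.ofReal_tsum_of_nonneg (fun n => by positivity) hsummable]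
  have hgeo : ∑' n : ℕ, g n = 4 * Real.exp (-(r^3)/8192) * (1 - ρ)⁻¹ := by
    rw [hg]
    rw [tsum_mul_left, tsum_geometric_of_lt_one hρ0 hρ1]
  -- final numeric comparison
  have hfinal : 2 * (4 * Real.exp (-(r^3)/8192) * (1 - ρ)⁻¹)
      ≤ 1048576 * Real.exp (-(r^3)/1048576) := by
    have hρle : ρ ≤ 1 - 1/16384 := by
      have h2 := Real.add_one_le_exp ((1:ℝ)/8192)
      have h3 : ρ = (Real.exp ((1:ℝ)/8192))⁻¹ := by
        rw [hρ, ← Real.exp_neg]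
        norm_num
      rw [h3]
      rw [inv_le_iff_one_le_mul₀ (Real.exp_pos _)]
      nlinarith [Real.exp_pos ((1:ℝ)/8192)]
    have h1ρ : 1/16384 ≤ 1 - ρ := by linarith
    have hinv : (1 - ρ)⁻¹ ≤ 16384 := by
      rw [show (16384:ℝ) = ((1:ℝ)/16384)⁻¹ by norm_num]
      exact inv_anti₀ (by norm_num) h1ρ
    have hee : Real.exp (-(r^3)/8192) ≤ Real.exp (-(r^3)/1048576) := by
      apply Real.exp_le_exp.mpr
      have : 0 < r^3 := by positivity
      rw [div_le_div_iff₀ (by norm_num) (by norm_num)]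
      nlinarith
    have he0 : 0 < Real.exp (-(r^3)/8192) := Real.exp_pos _
    have he1 : 0 < Real.exp (-(r^3)/1048576) := Real.exp_pos _
    calc 2 * (4 * Real.exp (-(r^3)/8192) * (1 - ρ)⁻¹)
        ≤ 2 * (4 * Real.exp (-(r^3)/8192) * 16384) := by
          have h8 : 0 ≤ 4 * Real.exp (-(r^3)/8192) := by positivity
          nlinarith
      _ = 131072 * Real.exp (-(r^3)/8192) := by ring
      _ ≤ 131072 * Real.exp (-(r^3)/1048576) := by nlinarith
      _ ≤ 1048576 * Real.exp (-(r^3)/1048576) := by nlinarith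
  calc ℙ {ω | ∃ z : ℝ, r^2/8 + z^2/8 ≤ B z ω}
      ≤ ℙ (({ω | ∃ z : ℝ, r^2/8 + z^2/8 ≤ B z ω} ∩ G) ∪ Gᶜ) := by
        apply measure_mono
        intro ω hω
        by_cases hωG : ω ∈ G
        · exact Or.inl ⟨hω, hωG⟩
        · exact Or.inr hωG
    _ ≤ ℙ ({ω | ∃ z : ℝ, r^2/8 + z^2/8 ≤ B z ω} ∩ G) + ℙ Gᶜ := measure_union_le _ _
    _ = ℙ ({ω | ∃ z : ℝ, r^2/8 + z^2/8 ≤ B z ω} ∩ G) := by rw [hGc, add_zero]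
    _ ≤ ℙ ((⋃ n : ℕ, Up n) ∪ ⋃ n : ℕ, Un n) := measure_mono hsub
    _ ≤ ℙ (⋃ n : ℕ, Up n) + ℙ (⋃ n : ℕ, Un n) := measure_union_le _ _
    _ ≤ (∑' n : ℕ, ℙ (Up n)) + ∑' n : ℕ, ℙ (Un n) := by
        gcongr <;> exact measure_iUnion_le _
    _ ≤ (∑' n : ℕ, ENNReal.ofReal (g n)) + ∑' n : ℕ, ENNReal.ofReal (g n) := by
        exact add_le_add (ENNReal.tsum_le_tsum hUpB) (ENNReal.tsum_le_tsum hUnB)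
    _ = ENNReal.ofReal (∑' n : ℕ, g n) + ENNReal.ofReal (∑' n : ℕ, g n) := by rw [htsum]
    _ = ENNReal.ofReal (2 * (4 * Real.exp (-(r^3)/8192) * (1 - ρ)⁻¹)) := by
        have h1mρ : (0:ℝ) ≤ 1 - ρ := by linarith
        have hnn : (0:ℝ) ≤ 4 * Real.exp (-(r^3)/8192) * (1 - ρ)⁻¹ := by positivity
        rw [hgeo, ← ENNReal.ofReal_add hnn hnn]
        congr 1
        ring
    _ ≤ ENNReal.ofReal (1048576 * Real.exp (-(r^3)/1048576)) := ENNReal.ofReal_le_ofReal hfinal
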